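/- arXiv:2108.13632 — 2 statements merged into one kernel-verified Lean document; each statement's English description precedes it below -/
import Mathlib

section
/- The group SL(2,ℤ) admits the presentation ⟨x, y ∣ x·y·x = y·x·y, (x·y)^6 = 1⟩: the group homomorphism from the group presented by two generators x, y subject to the relations x·y·x·(y·x·y)⁻¹ and (x·y)^6, determined by sending x to a and y to b, is a group isomorphism onto SL(2,ℤ). -/
/-- The element `a` of `SL(2, ℤ)`, given by the matrix `[[1,1],[0,1]]`:
a right-handed Dehn twist on the torus. -/
def a : Matrix.SpecialLinearGroup (Fin 2) ℤ :=
  ⟨!![1, 1; 0, 1], by norm_num [Matrix.det_fin_two_of]⟩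

/-- The element `b` of `SL(2, ℤ)`, given by the matrix `[[1,0],[-1,1]]`:
a right-handed Dehn twist on the torus. -/
def b : Matrix.SpecialLinearGroup (Fin 2) ℤ :=
  ⟨!![1, 0; -1, 1], by norm_num [Matrix.det_fin_two_of]⟩

/-- The generator `x` of the free group on two generators. -/
def x : FreeGroup Bool := FreeGroup.of true

/-- The generator `y` of the free group on two generators. -/
def y : FreeGroup Bool := FreeGroup.of false

/-- The relators of the presentation `⟨x, y ∣ x·y·x = y·x·y, (x·y)^6 = 1⟩`. -/
def rels : Set (FreeGroup Bool) := {x * y * x * (y * x * y)⁻¹, (x * y) ^ 6}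

abbrev SL2 := Matrix.SpecialLinearGroup (Fin 2) ℤ
def mS : SL2 := ⟨!![0,1;-1,0], by norm_num [Matrix.det_fin_two_of]⟩
def mT : SL2 := ⟨!![0,1;-1,1], by norm_num [Matrix.det_fin_two_of]⟩
def mJ : SL2 := ⟨!![-1,0;0,-1], by norm_num [Matrix.det_fin_two_of]⟩
def bi : SL2 := ⟨!![1,0;1,1], by norm_num [Matrix.det_fin_two_of]⟩

lemma mJ_comm (M : SL2) : mJ * M = M * mJ := by
  ext i j; simp only [Matrix.SpecialLinearGroup.coe_mul, Matrix.SpecialLinearGroup.coe_pow]; fin_cases i <;> fin_cases j <;>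
    simp [mJ, Matrix.SpecialLinearGroup.coe_mul, Matrix.mul_apply, Fin.sum_univ_succ]

lemma mJJ : mJ * mJ = 1 := by
  ext i j; simp only [Matrix.SpecialLinearGroup.coe_mul, Matrix.SpecialLinearGroup.coe_pow]; fin_cases i <;> fin_cases j <;>
    simp [mJ, Matrix.mul_apply, Fin.sum_univ_succ]

lemma mS2 : mS * mS = mJ := by
  ext i j; simp only [Matrix.SpecialLinearGroup.coe_mul, Matrix.SpecialLinearGroup.coe_pow]; fin_cases i <;> fin_cases j <;>
    simp [mS, mJ, Matrix.mul_apply, Fin.sum_univ_succ]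

lemma mT3 : mT ^ 3 = mJ := by
  ext i j; simp only [Matrix.SpecialLinearGroup.coe_mul, Matrix.SpecialLinearGroup.coe_pow]; fin_cases i <;> fin_cases j <;>
    simp [mT, mJ, pow_succ, Matrix.mul_apply, Fin.sum_univ_succ]

lemma mT4 : mT ^ 2 * mT ^ 2 = mJ * mT := by
  ext i j; simp only [Matrix.SpecialLinearGroup.coe_mul, Matrix.SpecialLinearGroup.coe_pow]; fin_cases i <;> fin_cases j <;>
    simp [mT, mJ, pow_succ, Matrix.mul_apply, Fin.sum_univ_succ]

lemma mTmS : mT * mS = mJ * bi := by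
  ext i j; simp only [Matrix.SpecialLinearGroup.coe_mul, Matrix.SpecialLinearGroup.coe_pow]; fin_cases i <;> fin_cases j <;>
    simp [mT, mS, mJ, bi, Matrix.mul_apply, Fin.sum_univ_succ]

lemma mT2mS : mT ^ 2 * mS = mJ * a := by
  ext i j; simp only [Matrix.SpecialLinearGroup.coe_mul, Matrix.SpecialLinearGroup.coe_pow]; fin_cases i <;> fin_cases j <;>
    simp [mT, mS, mJ, a, pow_succ, Matrix.mul_apply, Fin.sum_univ_succ]

lemma mJ_ne_one : mJ ≠ 1 := by
  intro h
  have := congrArg (fun m : SL2 => m.1 0 0) h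
  simp [mJ] at this

lemma mS_entry : mS.1 0 1 = 1 := rfl
lemma mT_entry : mT.1 0 1 = 1 := rfl
lemma mT2_entry : (mT ^ 2).1 0 1 = 1 := by
  simp only [Matrix.SpecialLinearGroup.coe_pow]; simp [mT, pow_succ, Matrix.mul_apply, Fin.sum_univ_succ]

lemma one_entry : (1 : SL2).1 0 1 = 0 := by simp
lemma mJ_entry : mJ.1 0 1 = 0 := rfl

def Pos (M : SL2) : Prop :=
  0 ≤ M.1 0 0 ∧ 0 ≤ M.1 0 1 ∧ 0 ≤ M.1 1 0 ∧ 0 ≤ M.1 1 1 ∧ 1 ≤ M.1 0 1 + M.1 1 0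

lemma Pos_bi : Pos bi := by refine ⟨?_,?_,?_,?_,?_⟩ <;> norm_num [bi]
lemma Pos_a : Pos a := by refine ⟨?_,?_,?_,?_,?_⟩ <;> norm_num [a]

lemma mul_entries (K M : SL2) (i j : Fin 2) :
    (K * M).1 i j = K.1 i 0 * M.1 0 j + K.1 i 1 * M.1 1 j := by
  simp [Matrix.SpecialLinearGroup.coe_mul, Matrix.mul_apply, Fin.sum_univ_succ]

lemma Pos_a_mul {M : SL2} (h : Pos M) : Pos (a * M) := by
  obtain ⟨h1, h2, h3, h4, h5⟩ := h
  refine ⟨?_, ?_, ?_, ?_, ?_⟩ <;> simp only [mul_entries] <;> simp [a] <;> omega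

lemma Pos_bi_mul {M : SL2} (h : Pos M) : Pos (bi * M) := by
  obtain ⟨h1, h2, h3, h4, h5⟩ := h
  refine ⟨?_, ?_, ?_, ?_, ?_⟩ <;> simp only [mul_entries] <;> simp [bi] <;> omega

lemma Pos_ne {M : SL2} (h : Pos M) : M ≠ 1 ∧ M ≠ mJ := by
  constructor <;> intro hM <;> subst hM
  · have := h.2.2.2.2; simp at this
  · have := h.2.2.2.2
    have e1 : mJ.1 0 1 = 0 := rfl
    have e2 : mJ.1 1 0 = 0 := rfl
    rw [e1, e2] at this; omega

inductive L where | sg | t1 | t2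
  deriving DecidableEq

def typ : L → Bool | .sg => true | .t1 => false | .t2 => false

def lM : L → SL2 | .sg => mS | .t1 => mT | .t2 => mT ^ 2

def evalM : List L → SL2
  | [] => 1
  | l :: w => lM l * evalM w

def Alt (w : List L) : Prop := w.Chain' (fun l l' => typ l ≠ typ l')

lemma evalM_append (u v : List L) : evalM (u ++ v) = evalM u * evalM v := by
  induction u with
  | nil => simp [evalM]
  | cons l u ih => simp [evalM, ih, mul_assoc]

lemma hKJ (K M : SL2) : K * (mJ * M) = mJ * (K * M) := by
  rw [← mul_assoc, ← mJ_comm K, mul_assoc]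

lemma hJJ (M : SL2) : mJ * (mJ * M) = M := by rw [← mul_assoc, mJJ, one_mul]

lemma blk : ∀ (n : ℕ) (w : List L), w.length ≤ n → Alt w →
    (∀ l, w.head? = some l → typ l = false) → w.getLast? = some L.sg →
    ∃ M : SL2, Pos M ∧ (evalM w = M ∨ evalM w = mJ * M) := by
  intro n
  induction n with
  | zero =>
      intro w hlen _ _ hlast
      have hw : w = [] := List.eq_nil_of_length_eq_zero (Nat.le_zero.mp hlen)
      subst hw; simp at hlast
  | succ n ih =>
      intro w hlen hAlt hhead hlast
      match w, hAlt, hhead, hlast with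
      | [], _, _, hlast => simp at hlast
      | [l1], _, hhead, hlast =>
          simp at hlast
          subst hlast
          have := hhead L.sg rfl
          simp [typ] at this
      | l1 :: l2 :: w2, hAlt, hhead, hlast =>
          have h12 : typ l1 ≠ typ l2 := (List.isChain_cons_cons.mp hAlt).1
          have ht1 : typ l1 = false := hhead l1 rfl
          have ht2 : typ l2 = true := by
            cases h : typ l2
            · rw [ht1, h] at h12; simp at h12
            · rfl
          have hl2 : l2 = L.sg := by cases l2 <;> simp [typ] at ht2 ⊢
          subst hl2
          cases w2 with
          | nil =>
              have hl1 : l1 = L.t1 ∨ l1 = L.t2 := by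
                cases l1 <;> simp [typ] at ht1 ⊢
              rcases hl1 with rfl | rfl
              · exact ⟨bi, Pos_bi, Or.inr (by
                  show mT * (mS * 1) = mJ * bi
                  rw [mul_one, mTmS])⟩
              · exact ⟨a, Pos_a, Or.inr (by
                  show mT ^ 2 * (mS * 1) = mJ * a
                  rw [mul_one, mT2mS])⟩
          | cons l3 w3 =>
              have hAlt2 : Alt (l3 :: w3) := ((List.isChain_cons_cons.mp hAlt).2).tail
              have hh3 : typ l3 = false := by
                have := (List.isChain_cons_cons.mp ((List.isChain_cons_cons.mp hAlt).2)).1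
                cases h : typ l3
                · rfl
                · rw [ht2, h] at this; simp at this
              have hlast3 : (l3 :: w3).getLast? = some L.sg := by
                rw [List.getLast?_cons_cons, List.getLast?_cons_cons] at hlast
                exact hlast
              have hlen3 : (l3 :: w3).length ≤ n := by
                simp at hlen ⊢; omega
              obtain ⟨M, hM, hor⟩ := ih (l3 :: w3) hlen3 hAlt2
                (by intro l hl; simp at hl; rw [← hl]; exact hh3) hlast3
              have hl1 : l1 = L.t1 ∨ l1 = L.t2 := by
                cases l1 <;> simp [typ] at ht1 ⊢
              have hE : evalM (l1 :: L.sg :: l3 :: w3)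
                  = lM l1 * (mS * evalM (l3 :: w3)) := rfl
              rcases hl1 with rfl | rfl <;> simp only [lM] at hE
              · rcases hor with h | h
                · refine ⟨bi * M, Pos_bi_mul hM, Or.inr ?_⟩
                  rw [hE, h, ← mul_assoc, ← mul_assoc, mTmS, mul_assoc]
                · refine ⟨bi * M, Pos_bi_mul hM, Or.inl ?_⟩
                  rw [hE, h, hKJ mS, hKJ mT, ← mul_assoc mT, mTmS]
                  rw [mul_assoc, hJJ]
              · rcases hor with h | h
                · refine ⟨a * M, Pos_a_mul hM, Or.inr ?_⟩
                  rw [hE, h, ← mul_assoc, ← mul_assoc, mT2mS, mul_assoc]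
                · refine ⟨a * M, Pos_a_mul hM, Or.inl ?_⟩
                  rw [hE, h, hKJ mS, hKJ (mT^2), ← mul_assoc (mT^2), mT2mS]
                  rw [mul_assoc, hJJ]

lemma mT2T : mT ^ 2 * mT = mJ := by rw [← pow_succ]; exact mT3
lemma mTT2 : mT * mT ^ 2 = mJ := by rw [← pow_succ']; exact mT3
lemma mS_eq : mS = mS⁻¹ * mJ := by rw [← mS2, ← mul_assoc, inv_mul_cancel, one_mul]
lemma mT2_eq : (mT ^ 2 : SL2) = mJ * mT⁻¹ := by
  rw [eq_mul_inv_iff_mul_eq]; exact mT2T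
lemma mT_eq : (mT : SL2) = mJ * (mT ^ 2)⁻¹ := by
  rw [eq_mul_inv_iff_mul_eq]; exact mTT2
lemma mT2T_inv : mT ^ 2 * mT⁻¹ = mT := by rw [pow_two, mul_inv_cancel_right]
lemma idT2 : (mT ^ 2 : SL2) = mJ * (mT * (mT ^ 2)⁻¹) := by
  rw [← mul_assoc, eq_mul_inv_iff_mul_eq]; exact mT4

def Good (v : List L) : Prop :=
  (∃ l, v = [l]) ∨ ((∀ l, v.head? = some l → typ l = false) ∧ v.getLast? = some L.sg)

lemma conj_comp (K u e : SL2) (ε : Bool) :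
    K * ((cond ε mJ 1 * (u * (e * u⁻¹))) * K⁻¹)
      = cond ε mJ 1 * ((K * u) * (e * (K * u)⁻¹)) := by
  cases ε <;> simp [mul_assoc, mul_inv_rev, hKJ]

lemma flipJ (ε : Bool) (Z : SL2) : mJ * (cond ε mJ 1 * Z) = cond (!ε) mJ 1 * Z := by
  cases ε <;> simp [hJJ]

lemma alt_tail {l : L} {w : List L} (h : Alt (l :: w)) : Alt w :=
  (List.isChain_cons.mp h).2

lemma alt_left {u v : List L} (h : Alt (u ++ v)) : Alt u :=
  h.left_of_append

lemma alt_swap_last {w₁ : List L} {l l' : L} (h : typ l = typ l')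
    (hA : Alt (w₁ ++ [l])) : Alt (w₁ ++ [l']) := by
  unfold Alt at hA ⊢
  simp only [List.Chain', List.isChain_append] at hA ⊢
  refine ⟨hA.1, List.isChain_singleton _, ?_⟩
  intro x hx y hy
  simp at hy
  subst hy
  rw [← h]
  exact hA.2.2 x hx l (by simp)

lemma alt_append_sg {v : List L} {lz : L} (hA : Alt v) (hlast : v.getLast? = some lz)
    (hlz : typ lz = false) : Alt (v ++ [L.sg]) := by
  unfold Alt at hA ⊢
  simp only [List.Chain', List.isChain_append]
  refine ⟨hA, List.isChain_singleton _, ?_⟩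
  intro x hx y hy
  simp at hy
  subst hy
  rw [hlast] at hx
  simp at hx
  subst hx
  rw [hlz]
  simp [typ]

lemma cr : ∀ (n : ℕ) (w : List L), w.length ≤ n → Alt w → w ≠ [] →
    ∃ (u : SL2) (ε : Bool) (v : List L), Alt v ∧ v ≠ [] ∧ Good v ∧
      evalM w = cond ε mJ 1 * (u * (evalM v * u⁻¹)) := by
  intro n
  induction n with
  | zero =>
      intro w hlen _ hne
      cases w
      · exact absurd rfl hne
      · simp at hlen
  | succ n ih =>
      intro w hlen hAlt hne
      rcases List.eq_nil_or_concat w with rfl | ⟨w₀, lz, rfl⟩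
      · exact absurd rfl hne
      rw [List.concat_eq_append] at hlen hAlt ⊢
      cases w₀ with
      | nil =>
          exact ⟨1, false, [lz], List.isChain_singleton _, by simp, Or.inl ⟨lz, rfl⟩, by simp⟩
      | cons l1 w₁ =>
          have hAlt1 : Alt (w₁ ++ [lz]) := alt_tail hAlt
          have hAltw₁ : Alt w₁ := alt_left hAlt1
          have hlen₁ : w₁.length ≤ n := by simp at hlen; omega
          have hEw : evalM ((l1 :: w₁) ++ [lz]) = lM l1 * (evalM w₁ * (lM lz * 1)) := by
            show evalM (l1 :: (w₁ ++ [lz])) = _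
            rw [show evalM (l1 :: (w₁ ++ [lz])) = lM l1 * evalM (w₁ ++ [lz]) from rfl,
              evalM_append]
            rfl
          have hGdir : typ l1 = false → lz = L.sg →
              ∃ (u : SL2) (ε : Bool) (v : List L), Alt v ∧ v ≠ [] ∧ Good v ∧
                evalM ((l1 :: w₁) ++ [lz]) = cond ε mJ 1 * (u * (evalM v * u⁻¹)) := by
            intro h1 h2
            refine ⟨1, false, (l1 :: w₁) ++ [lz], hAlt, by simp, ?_, by simp⟩
            refine Or.inr ⟨?_, ?_⟩
            · intro l hl
              simp at hl
              rw [← hl]; exact h1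
            · rw [h2]
              exact List.getLast?_concat
          -- the sandwich cases
          cases l1 with
          | sg =>
            cases lz with
            | sg =>
              have hw₁ne : w₁ ≠ [] := by
                rintro rfl
                simp [Alt, typ, List.Chain'] at hAlt
              obtain ⟨u₀, ε₀, v, hAv, hvne, hGv, hEv⟩ := ih w₁ hlen₁ hAltw₁ hw₁ne
              refine ⟨mS * u₀, !ε₀, v, hAv, hvne, hGv, ?_⟩
              rw [hEw]
              simp only [lM]
              have key : mS * (evalM w₁ * (mS * 1)) = mJ * (mS * (evalM w₁ * mS⁻¹)) := by
                rw [mul_one]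
                have h1 : evalM w₁ * mS = mJ * (evalM w₁ * mS⁻¹) := by
                  nth_rewrite 1 [mS_eq]
                  rw [← mul_assoc, ← mJ_comm]
                rw [h1, hKJ]
              rw [key, hEv, conj_comp, flipJ]
            | t1 =>
              -- move the sg to the end
              refine ⟨mS, false, (w₁ ++ [L.t1]) ++ [L.sg], ?_, by simp, ?_, ?_⟩
              · exact alt_append_sg (lz := L.t1) hAlt1 List.getLast?_concat rfl
              · refine Or.inr ⟨?_, by simp⟩
                intro l hl
                cases w₁ with
                | nil => simp at hl; rw [← hl]; rfl
                | cons lh w₂ =>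
                    simp at hl
                    have := (List.isChain_cons_cons.mp hAlt).1
                    rw [← hl]
                    cases h : typ lh
                    · rfl
                    · rw [h] at this; simp [typ] at this
              · rw [hEw]
                rw [evalM_append, evalM_append]
                simp [evalM, lM, mul_assoc]
            | t2 =>
              refine ⟨mS, false, (w₁ ++ [L.t2]) ++ [L.sg], ?_, by simp, ?_, ?_⟩
              · exact alt_append_sg (lz := L.t2) hAlt1 List.getLast?_concat rfl
              · refine Or.inr ⟨?_, by simp⟩
                intro l hl
                cases w₁ with
                | nil => simp at hl; rw [← hl]; rfl
                | cons lh w₂ =>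
                    simp at hl
                    have := (List.isChain_cons_cons.mp hAlt).1
                    rw [← hl]
                    cases h : typ lh
                    · rfl
                    · rw [h] at this; simp [typ] at this
              · rw [hEw]
                rw [evalM_append, evalM_append]
                simp [evalM, lM, mul_assoc]
          | t1 =>
            cases lz with
            | sg => exact hGdir rfl rfl
            | t1 =>
              have hw₁ne : w₁ ≠ [] := by
                rintro rfl
                simp [Alt, typ, List.Chain'] at hAlt
              have hAltv₀ : Alt (w₁ ++ [L.t2]) := alt_swap_last (l := L.t1) (l' := L.t2) rfl hAlt1
              have hlenv₀ : (w₁ ++ [L.t2]).length ≤ n := by simp at hlen ⊢; omega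
              obtain ⟨u₀, ε₀, v, hAv, hvne, hGv, hEv⟩ :=
                ih (w₁ ++ [L.t2]) hlenv₀ hAltv₀ (by simp)
              refine ⟨mT * u₀, ε₀, v, hAv, hvne, hGv, ?_⟩
              rw [hEw]
              simp only [lM]
              have key : mT * (evalM w₁ * (mT * 1)) = mT * (evalM (w₁ ++ [L.t2]) * mT⁻¹) := by
                rw [evalM_append]
                show _ = mT * (evalM w₁ * (mT ^ 2 * 1) * mT⁻¹)
                rw [mul_one, mul_one, mul_assoc, mT2T_inv]
              rw [key, hEv, conj_comp]
            | t2 =>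
              have hw₁ne : w₁ ≠ [] := by
                rintro rfl
                simp [Alt, typ, List.Chain'] at hAlt
              obtain ⟨u₀, ε₀, v, hAv, hvne, hGv, hEv⟩ := ih w₁ hlen₁ hAltw₁ hw₁ne
              refine ⟨mT * u₀, !ε₀, v, hAv, hvne, hGv, ?_⟩
              rw [hEw]
              simp only [lM]
              have key : mT * (evalM w₁ * (mT ^ 2 * 1)) = mJ * (mT * (evalM w₁ * mT⁻¹)) := by
                rw [mul_one]
                have h1 : evalM w₁ * mT ^ 2 = mJ * (evalM w₁ * mT⁻¹) := by
                  nth_rewrite 1 [mT2_eq]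
                  rw [← mul_assoc, ← mJ_comm, mul_assoc]
                rw [h1, hKJ]
              rw [key, hEv, conj_comp, flipJ]
          | t2 =>
            cases lz with
            | sg => exact hGdir rfl rfl
            | t1 =>
              have hw₁ne : w₁ ≠ [] := by
                rintro rfl
                simp [Alt, typ, List.Chain'] at hAlt
              obtain ⟨u₀, ε₀, v, hAv, hvne, hGv, hEv⟩ := ih w₁ hlen₁ hAltw₁ hw₁ne
              refine ⟨mT ^ 2 * u₀, !ε₀, v, hAv, hvne, hGv, ?_⟩
              rw [hEw]
              simp only [lM]
              have key : mT ^ 2 * (evalM w₁ * (mT * 1))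
                  = mJ * (mT ^ 2 * (evalM w₁ * (mT ^ 2)⁻¹)) := by
                rw [mul_one]
                have h1 : evalM w₁ * mT = mJ * (evalM w₁ * (mT ^ 2)⁻¹) := by
                  nth_rewrite 1 [mT_eq]
                  rw [← mul_assoc, ← mJ_comm, mul_assoc]
                rw [h1, hKJ]
              rw [key, hEv, conj_comp, flipJ]
            | t2 =>
              have hw₁ne : w₁ ≠ [] := by
                rintro rfl
                simp [Alt, typ, List.Chain'] at hAlt
              have hAltv₀ : Alt (w₁ ++ [L.t1]) := alt_swap_last (l := L.t2) (l' := L.t1) rfl hAlt1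
              have hlenv₀ : (w₁ ++ [L.t1]).length ≤ n := by simp at hlen ⊢; omega
              obtain ⟨u₀, ε₀, v, hAv, hvne, hGv, hEv⟩ :=
                ih (w₁ ++ [L.t1]) hlenv₀ hAltv₀ (by simp)
              refine ⟨mT ^ 2 * u₀, !ε₀, v, hAv, hvne, hGv, ?_⟩
              rw [hEw]
              simp only [lM]
              have key : mT ^ 2 * (evalM w₁ * (mT ^ 2 * 1))
                  = mJ * (mT ^ 2 * (evalM (w₁ ++ [L.t1]) * (mT ^ 2)⁻¹)) := by
                rw [evalM_append]
                show _ = mJ * (mT ^ 2 * (evalM w₁ * (mT * 1) * (mT ^ 2)⁻¹))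
                rw [mul_one, mul_one, mul_assoc (evalM w₁) mT]
                have h1 : evalM w₁ * mT ^ 2 = mJ * (evalM w₁ * (mT * (mT ^ 2)⁻¹)) := by
                  nth_rewrite 1 [idT2]
                  rw [← mul_assoc, ← mJ_comm, mul_assoc]
                rw [h1, hKJ]
              rw [key, hEv, conj_comp, flipJ]

lemma mJ_inv : (mJ)⁻¹ = mJ := inv_eq_of_mul_eq_one_right mJJ

lemma single_ne (l : L) : evalM [l] ≠ 1 ∧ evalM [l] ≠ mJ := by
  have he : (evalM [l]).1 0 1 = 1 := by
    cases l <;> simp only [evalM, lM, mul_one, Matrix.SpecialLinearGroup.coe_mul, Matrix.SpecialLinearGroup.coe_pow] <;> simp [evalM, lM, mS, mT, pow_succ, Matrix.mul_apply, Fin.sum_univ_succ]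
  constructor <;> intro h <;> rw [h] at he
  · simp at he
  · rw [mJ_entry] at he; exact absurd he (by norm_num)

lemma good_ne {v : List L} (hA : Alt v) (hvne : v ≠ []) (hG : Good v) :
    evalM v ≠ 1 ∧ evalM v ≠ mJ := by
  rcases hG with ⟨l, rfl⟩ | ⟨hh, hl⟩
  · exact single_ne l
  · obtain ⟨M, hM, hor⟩ := blk v.length v le_rfl hA hh hl
    have hM1 := (Pos_ne hM).1
    have hMJ := (Pos_ne hM).2
    rcases hor with h | h <;> rw [h] <;> constructor <;> intro hc
    · exact hM1 hc
    · exact hMJ hc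
    · have : M = mJ := by
        have h2 := congrArg (fun z => mJ * z) hc
        simpa [hJJ] using h2
      exact hMJ this
    · have : M = 1 := by
        have := congrArg (fun z => mJ * z) hc
        simpa [hJJ, mJJ] using this
      exact hM1 this

lemma conj_eval (u e z : SL2) (h : u * (e * u⁻¹) = z) : e = u⁻¹ * z * u := by
  rw [← h]; group

lemma alt_ne {w : List L} (hA : Alt w) (hne : w ≠ []) :
    evalM w ≠ 1 ∧ evalM w ≠ mJ := by
  obtain ⟨u, ε, v, hAv, hvne, hGv, hE⟩ := cr w.length w le_rfl hA hne
  obtain ⟨h1, h2⟩ := good_ne hAv hvne hGv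
  have hconj : ∀ z : SL2, u * (evalM v * u⁻¹) = z → evalM v = u⁻¹ * z * u :=
    fun z h => conj_eval u (evalM v) z h
  constructor <;> intro hcon <;> rw [hcon] at hE <;> cases ε <;> simp at hE
  · exact h1 (by rw [hconj 1 hE.symm]; simp)
  · -- mJ * (u * (evalM v * u⁻¹)) = 1 → u * (...) = mJ
    have : u * (evalM v * u⁻¹) = mJ := by
      have := congrArg (fun z => mJ * z) hE.symm
      simpa [hJJ, mJJ] using this
    have h3 : evalM v = u⁻¹ * mJ * u := hconj mJ this
    rw [← mJ_comm u⁻¹, mul_assoc] at h3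
    simp at h3
    exact h2 h3
  · exact h2 (by rw [hconj mJ hE.symm, ← mJ_comm u⁻¹, mul_assoc]; simp)
  · have : u * (evalM v * u⁻¹) = 1 := by
      have := congrArg (fun z => mJ * z) hE.symm
      simpa [hJJ, mJJ] using this
    exact h1 (by rw [hconj 1 this]; simp)

abbrev G := PresentedGroup rels
def X : G := PresentedGroup.of true
def Yg : G := PresentedGroup.of false

lemma mk_rel : ∀ r ∈ rels, PresentedGroup.mk rels r = 1 := fun _ hr =>
  (QuotientGroup.eq_one_iff _).mpr (Subgroup.subset_normalClosure hr)

lemma rel_braid : X * Yg * X = Yg * X * Yg := by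
  have h := mk_rel (x * y * x * (y * x * y)⁻¹) (by left; rfl)
  simp only [map_mul, map_inv] at h
  have hx : PresentedGroup.mk rels x = X := rfl
  have hy : PresentedGroup.mk rels y = Yg := rfl
  rw [hx, hy, mul_inv_eq_one] at h
  exact h

lemma rel_six : (X * Yg) ^ 6 = 1 := by
  have h := mk_rel ((x*y)^6) (by right; rfl)
  simp only [map_mul, map_pow] at h
  exact h

def tG : G := X * Yg
def sG : G := X * Yg * X
def Cg : G := (X * Yg) ^ 3

lemma hst : sG ^ 2 = tG ^ 3 := by
  have : sG ^ 2 = (X*Yg*X) * (Yg*X*Yg) := by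
    rw [← rel_braid]; unfold sG; simp [pow_succ, mul_assoc]
  rw [this]; unfold tG; simp [pow_succ, mul_assoc]

lemma hC2 : Cg * Cg = 1 := by
  have : Cg * Cg = (X*Yg)^6 := by unfold Cg; simp [pow_succ, mul_assoc]
  rw [this, rel_six]

lemma yx3 : (Yg * X) ^ 3 = Cg := by
  have h1 : (Yg * X) ^ 3 = (Yg*X*Yg) * (X*Yg*X) := by simp [pow_succ, mul_assoc]
  rw [h1, ← rel_braid]
  have h2 : X * Yg * X * (X * Yg * X) = sG ^ 2 := by unfold sG; simp [pow_succ, mul_assoc]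
  rw [h2, hst]; unfold Cg tG; rfl

lemma commX : X * Cg = Cg * X := by
  have h1 : Cg * X = X * ((Yg*X)^3) := by unfold Cg; simp [pow_succ, mul_assoc]
  rw [h1, yx3]

lemma commY : Yg * Cg = Cg * Yg := by
  have h1 : Yg * Cg = ((Yg*X)^3) * Yg := by unfold Cg; simp [pow_succ, mul_assoc]
  rw [h1, yx3]

lemma central : ∀ g : G, g * Cg = Cg * g := by
  intro g
  have : g ∈ Subgroup.centralizer {Cg} := by
    apply PresentedGroup.generated_by
    intro j
    rw [Subgroup.mem_centralizer_iff]
    rintro c rfl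
    cases j
    · exact commY.symm
    · exact commX.symm
  exact (Subgroup.mem_centralizer_iff.mp this Cg rfl).symm

lemma t3C : tG ^ 3 = Cg := rfl

lemma s_eq : sG = tG * X := rfl

lemma sG_inv : sG⁻¹ = Cg * sG := by
  apply inv_eq_of_mul_eq_one_right
  rw [← mul_assoc, central sG, mul_assoc, ← pow_two, hst, t3C, hC2]

lemma tG_inv : tG⁻¹ = Cg * tG ^ 2 := by
  apply inv_eq_of_mul_eq_one_right
  rw [← mul_assoc, central tG, mul_assoc, ← pow_succ', t3C, hC2]

lemma hs2' : sG * sG = Cg := by rw [← pow_two, hst, t3C]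
lemma hs2e (e : G) : sG * (sG * e) = Cg * e := by rw [← mul_assoc, hs2']
lemma ht12e (e : G) : tG * (tG * e) = tG ^ 2 * e := by rw [← mul_assoc, ← pow_two]
lemma ht2e (e : G) : tG * (tG ^ 2 * e) = Cg * e := by rw [← mul_assoc, ← pow_succ', t3C]
lemma hCCe (e : G) : Cg * (Cg * e) = e := by rw [← mul_assoc, hC2, one_mul]



def lG : L → G | .sg => sG | .t1 => tG | .t2 => tG ^ 2

def evalG : List L → G
  | [] => 1
  | l :: w => lG l * evalG w


def NF : Set G := {g | ∃ (δ : Bool) (w : List L), Alt w ∧ g = (cond δ Cg 1) * evalG w}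

lemma one_nf : (1 : G) ∈ NF := ⟨false, [], List.isChain_nil, by simp [evalG]⟩

lemma C_mul_nf {g : G} (h : g ∈ NF) : Cg * g ∈ NF := by
  obtain ⟨δ, w, hw, rfl⟩ := h
  refine ⟨!δ, w, hw, ?_⟩
  cases δ
  · simp
  · simp [← mul_assoc, hC2]

lemma s_mul_nf {g : G} (h : g ∈ NF) : sG * g ∈ NF := by
  obtain ⟨δ, w, hw, rfl⟩ := h
  rw [← mul_assoc, show sG * (cond δ Cg 1) = (cond δ Cg 1) * sG by
    cases δ <;> simp [central sG], mul_assoc]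
  cases w with
  | nil => exact ⟨δ, [L.sg], List.isChain_singleton _, by simp [evalG, lG]⟩
  | cons l w' =>
    cases l with
    | sg =>
      refine ⟨!δ, w', (List.isChain_cons.mp hw).2, ?_⟩
      rw [show evalG (L.sg :: w') = sG * evalG w' from rfl, hs2e]
      cases δ
      · simp
      · simp only [cond]; rw [hCCe]; simp
    | t1 =>
      exact ⟨δ, L.sg :: L.t1 :: w', List.isChain_cons_cons.mpr ⟨by simp [typ], hw⟩, rfl⟩
    | t2 =>
      exact ⟨δ, L.sg :: L.t2 :: w', List.isChain_cons_cons.mpr ⟨by simp [typ], hw⟩, rfl⟩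

lemma alt_t2_of_t1 {w' : List L} (hw : Alt (L.t1 :: w')) : Alt (L.t2 :: w') := by
  cases w' with
  | nil => exact List.isChain_singleton _
  | cons l'' w'' =>
    exact List.isChain_cons_cons.mpr ⟨(List.isChain_cons_cons.mp hw).1, (List.isChain_cons_cons.mp hw).2⟩

lemma t_mul_nf {g : G} (h : g ∈ NF) : tG * g ∈ NF := by
  obtain ⟨δ, w, hw, rfl⟩ := h
  rw [← mul_assoc, show tG * (cond δ Cg 1) = (cond δ Cg 1) * tG by
    cases δ <;> simp [central tG], mul_assoc]
  cases w with
  | nil => exact ⟨δ, [L.t1], List.isChain_singleton _, by simp [evalG, lG]⟩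
  | cons l w' =>
    cases l with
    | sg =>
      exact ⟨δ, L.t1 :: L.sg :: w', List.isChain_cons_cons.mpr ⟨by simp [typ], hw⟩, rfl⟩
    | t1 =>
      refine ⟨δ, L.t2 :: w', alt_t2_of_t1 hw, ?_⟩
      rw [show evalG (L.t1 :: w') = tG * evalG w' from rfl,
        show evalG (L.t2 :: w') = tG ^ 2 * evalG w' from rfl, ht12e]
    | t2 =>
      refine ⟨!δ, w', (List.isChain_cons.mp hw).2, ?_⟩
      rw [show evalG (L.t2 :: w') = tG ^ 2 * evalG w' from rfl, ht2e]
      cases δ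
      · simp
      · simp only [cond]; rw [hCCe]; simp


-- ## Generation (surjectivity)

lemma aba : a * b * a = mS := by
  ext i j; simp only [Matrix.SpecialLinearGroup.coe_mul, Matrix.SpecialLinearGroup.coe_pow, Matrix.SpecialLinearGroup.coe_inv]; fin_cases i <;> fin_cases j <;>
    simp [a, b, mS, Matrix.mul_apply, Fin.sum_univ_succ]

lemma ab_eq : a * b = mT := by
  ext i j; simp only [Matrix.SpecialLinearGroup.coe_mul, Matrix.SpecialLinearGroup.coe_pow, Matrix.SpecialLinearGroup.coe_inv]; fin_cases i <;> fin_cases j <;>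
    simp [a, b, mT, Matrix.mul_apply, Fin.sum_univ_succ]

lemma ab3 : (a * b) ^ 3 = mJ := by rw [ab_eq]; exact mT3

def Bk (k : ℤ) : SL2 := ⟨!![1,0;-k,1], by norm_num [Matrix.det_fin_two_of]⟩

lemma Bk_zero : Bk 0 = 1 := by
  ext i j; fin_cases i <;> fin_cases j <;> simp [Bk]

lemma Bk_succ (k : ℤ) : Bk (k+1) = Bk k * b := by
  ext i j; simp only [Matrix.SpecialLinearGroup.coe_mul, Matrix.SpecialLinearGroup.coe_pow, Matrix.SpecialLinearGroup.coe_inv]; fin_cases i <;> fin_cases j <;>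
    simp [Bk, b, Matrix.mul_apply, Fin.sum_univ_succ] <;> ring

lemma Bk_pred (k : ℤ) : Bk (k-1) * b = Bk k := by
  ext i j; simp only [Matrix.SpecialLinearGroup.coe_mul, Matrix.SpecialLinearGroup.coe_pow, Matrix.SpecialLinearGroup.coe_inv]; fin_cases i <;> fin_cases j <;>
    simp [Bk, b, Matrix.mul_apply, Fin.sum_univ_succ] <;> ring

def H : Subgroup SL2 := Subgroup.closure {a, b}

lemma a_mem : a ∈ H := Subgroup.subset_closure (by left; rfl)
lemma b_mem : b ∈ H := Subgroup.subset_closure (by right; rfl)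
lemma mS_mem : mS ∈ H := aba ▸ Subgroup.mul_mem _ (Subgroup.mul_mem _ a_mem b_mem) a_mem
lemma mJ_mem : mJ ∈ H := by
  rw [← ab3]
  exact pow_mem (mul_mem a_mem b_mem) 3

lemma Bk_mem (k : ℤ) : Bk k ∈ H := by
  induction k using Int.induction_on with
  | zero => rw [Bk_zero]; exact one_mem _
  | succ k ih => rw [show ((k:ℤ)+1) = (k:ℤ)+1 from rfl, Bk_succ]; exact mul_mem ih b_mem
  | pred k ih =>
      have : Bk (-(k:ℤ) - 1) = Bk (-(k:ℤ)) * b⁻¹ := by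
        rw [← Bk_pred (-(k:ℤ))]; group
      rw [this]; exact mul_mem ih (inv_mem b_mem)

lemma det_entries (m : SL2) : m.1 0 0 * m.1 1 1 - m.1 0 1 * m.1 1 0 = 1 := by
  have := m.2; rwa [Matrix.det_fin_two] at this

lemma base_mem (m : SL2) (hq : m.1 0 1 = 0) : m ∈ H := by
  have hd := det_entries m
  rw [hq] at hd
  simp only [zero_mul, sub_zero] at hd
  rcases Int.mul_eq_one_iff_eq_one_or_neg_one.mp hd with ⟨h00, h11⟩ | ⟨h00, h11⟩
  · have : m = Bk (-(m.1 1 0)) := by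
      ext i j; fin_cases i <;> fin_cases j <;> simp [Bk, hq, h00, h11]
    rw [this]; exact Bk_mem _
  · have : m = mJ * Bk (m.1 1 0) := by
      ext i j; simp only [Matrix.SpecialLinearGroup.coe_mul, Matrix.SpecialLinearGroup.coe_pow, Matrix.SpecialLinearGroup.coe_inv]; fin_cases i <;> fin_cases j <;>
        simp [Bk, mJ, hq, h00, h11, Matrix.mul_apply, Fin.sum_univ_succ]
    rw [this]; exact mul_mem mJ_mem (Bk_mem _)

lemma key_entry (m : SL2) (n : ℤ) :
    (m * Bk n * mS).1 0 1 = m.1 0 0 - m.1 0 1 * n := by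
  simp only [Matrix.SpecialLinearGroup.coe_mul]; simp [Bk, mS, Matrix.SpecialLinearGroup.coe_mul, Matrix.mul_apply, Fin.sum_univ_succ]
  ring

lemma gen_aux : ∀ N : ℕ, ∀ m : SL2, (m.1 0 1).natAbs ≤ N → m ∈ H := by
  intro N
  induction N with
  | zero => intro m hm; exact base_mem m (by omega)
  | succ N ih =>
      intro m hm
      by_cases hq : m.1 0 1 = 0
      · exact base_mem m hq
      · set p := m.1 0 0 with hp
        set q := m.1 0 1 with hqd
        set n := p / q with hn
        have hrem : p - q * n = p % q := by rw [Int.emod_def]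
        have h1 : (m * Bk n * mS).1 0 1 = p % q := by rw [key_entry, hrem]
        have h2 : (p % q).natAbs ≤ N := by
          have := Int.emod_nonneg p hq
          have := Int.emod_lt p hq
          have : |q| ≤ (N:ℤ) + 1 := by
            rw [Int.abs_eq_natAbs]; exact_mod_cast hm
          omega
        have hmem : m * Bk n * mS ∈ H := ih _ (by rw [h1]; exact h2)
        have : m = (m * Bk n * mS) * mS⁻¹ * (Bk n)⁻¹ := by group
        rw [this]
        exact mul_mem (mul_mem hmem (inv_mem mS_mem)) (inv_mem (Bk_mem n))

lemma gen (m : SL2) : m ∈ H := gen_aux (m.1 0 1).natAbs m le_rfl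

-- ## relators hold

lemma hrels : ∀ r ∈ rels, FreeGroup.lift (fun i : Bool => if i then a else b) r = 1 := by
  intro r hr
  rcases hr with h | h <;> subst h <;>
    simp only [x, y, map_mul, map_inv, map_pow, FreeGroup.lift_apply_of, if_true, if_false] <;>
  · ext i j; simp only [Matrix.SpecialLinearGroup.coe_mul, Matrix.SpecialLinearGroup.coe_pow, Matrix.SpecialLinearGroup.coe_inv]; fin_cases i <;> fin_cases j <;>
      simp [a, b, pow_succ, Matrix.mul_apply, Fin.sum_univ_succ]

-- ## glue

def phi : G →* SL2 := PresentedGroup.toGroup hrels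

lemma phiX : phi X = a := by
  simp [phi, X, PresentedGroup.toGroup.of]

lemma phiY : phi Yg = b := by
  simp [phi, Yg, PresentedGroup.toGroup.of]

lemma phiS : phi sG = mS := by
  rw [show sG = X * Yg * X from rfl, map_mul, map_mul, phiX, phiY, aba]

lemma phiT : phi tG = mT := by
  rw [show tG = X * Yg from rfl, map_mul, phiX, phiY, ab_eq]

lemma phiC : phi Cg = mJ := by
  rw [show Cg = (X * Yg) ^ 3 from rfl, map_pow, map_mul, phiX, phiY, ab3]

lemma phi_evalG : ∀ w : List L, phi (evalG w) = evalM w := by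
  intro w
  induction w with
  | nil => simp [evalG, evalM]
  | cons l w ih =>
      rw [show evalG (l :: w) = lG l * evalG w from rfl,
        show evalM (l :: w) = lM l * evalM w from rfl, map_mul, ih]
      cases l <;> simp [lG, lM, phiS, phiT, map_pow]

-- normal form generator closures

lemma tinv_mul_nf {g : G} (h : g ∈ NF) : tG⁻¹ * g ∈ NF := by
  have e : tG⁻¹ * g = Cg * (tG * (tG * g)) := by
    rw [tG_inv, pow_two]; simp [mul_assoc]
  rw [e]; exact C_mul_nf (t_mul_nf (t_mul_nf h))

lemma sinv_mul_nf {g : G} (h : g ∈ NF) : sG⁻¹ * g ∈ NF := by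
  have e : sG⁻¹ * g = Cg * (sG * g) := by rw [sG_inv]; simp [mul_assoc]
  rw [e]; exact C_mul_nf (s_mul_nf h)

lemma X_eq : X = tG⁻¹ * sG := by rw [s_eq, inv_mul_cancel_left]

lemma X_mul_nf {g : G} (h : g ∈ NF) : X * g ∈ NF := by
  have e : X * g = tG⁻¹ * (sG * g) := by rw [X_eq]; simp [mul_assoc]
  rw [e]; exact tinv_mul_nf (s_mul_nf h)

lemma Xinv_mul_nf {g : G} (h : g ∈ NF) : X⁻¹ * g ∈ NF := by
  have e : X⁻¹ * g = sG⁻¹ * (tG * g) := by rw [X_eq]; simp [mul_assoc, mul_inv_rev]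
  rw [e]; exact sinv_mul_nf (t_mul_nf h)

lemma Y_eq : Yg = X⁻¹ * tG := by rw [show tG = X * Yg from rfl, inv_mul_cancel_left]

lemma Y_mul_nf {g : G} (h : g ∈ NF) : Yg * g ∈ NF := by
  have e : Yg * g = X⁻¹ * (tG * g) := by rw [Y_eq]; simp [mul_assoc]
  rw [e]; exact Xinv_mul_nf (t_mul_nf h)

lemma Yinv_mul_nf {g : G} (h : g ∈ NF) : Yg⁻¹ * g ∈ NF := by
  have e : Yg⁻¹ * g = tG⁻¹ * (X * g) := by rw [Y_eq]; simp [mul_assoc, mul_inv_rev]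
  rw [e]; exact tinv_mul_nf (X_mul_nf h)

lemma allNF (g : G) : g ∈ NF := by
  have hg : g ∈ Subgroup.closure (Set.range (PresentedGroup.of : Bool → G)) := by
    rw [PresentedGroup.closure_range_of]; exact Subgroup.mem_top g
  induction hg using Subgroup.closure_induction_left with
  | one => exact one_nf
  | mul_left z hz w hw ih =>
      obtain ⟨i, rfl⟩ := hz
      cases i
      · exact Y_mul_nf ih
      · exact X_mul_nf ih
  | inv_mul_cancel z hz w hw ih =>
      obtain ⟨i, rfl⟩ := hz
      cases i
      · exact Yinv_mul_nf ih
      · exact Xinv_mul_nf ih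

lemma phi_inj : Function.Injective phi := by
  rw [injective_iff_map_eq_one]
  intro g hg
  obtain ⟨delta, w, hA, rfl⟩ := allNF g
  rw [map_mul, phi_evalG] at hg
  have hcond : phi (cond delta Cg 1) = cond delta mJ 1 := by
    cases delta <;> simp [phiC]
  rw [hcond] at hg
  cases w with
  | nil =>
      cases delta
      · simp [evalG]
      · rw [show evalM ([] : List L) = 1 from rfl, mul_one] at hg
        simp at hg
        exact absurd hg mJ_ne_one
  | cons l w' =>
      exfalso
      obtain ⟨h1, h2⟩ := alt_ne hA (by simp)
      cases delta
      · simp at hg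
        exact h1 hg
      · simp only [cond] at hg
        have : evalM (l :: w') = mJ := by
          have h3 := congrArg (fun z => mJ * z) hg
          simpa [hJJ] using h3
        exact h2 this

lemma phi_surj : Function.Surjective phi := by
  intro m
  have hm : m ∈ H := gen m
  have hle : H ≤ phi.range := by
    rw [H]
    apply Subgroup.closure_le _ |>.mpr
    intro z hz
    rcases hz with h | h
    · exact ⟨X, by rw [phiX, h]⟩
    · exact ⟨Yg, by rw [phiY]; rw [Set.mem_singleton_iff] at h; rw [h]⟩
  obtain ⟨g, hg⟩ := hle hm
  exact ⟨g, hg⟩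


/-- `SL(2, ℤ)` admits the presentation `⟨x, y ∣ x·y·x = y·x·y, (x·y)^6 = 1⟩`:
the relators are sent to `1` by the map determined by `x ↦ a`, `y ↦ b`, and the induced
group homomorphism from the presented group to `SL(2, ℤ)` is an isomorphism
(i.e. it is bijective). -/
theorem sl2z_presentation :
    ∃ h : ∀ r ∈ rels, FreeGroup.lift (fun i : Bool => if i then a else b) r = 1,
      Function.Bijective
        (PresentedGroup.toGroup (f := fun i : Bool => if i then a else b) h) := by
  exact ⟨hrels, phi_inj, phi_surj⟩
end

section
/- (Orienting a tree of spheres so all intersections are negative.) Let T be a simple graph on the vertex set Fin m (with m ≥ 1) that is a tree (connected and acyclic), let M be a ℤ-module equipped with a symmetric ℤ-bilinear form B, let v : Fin m → M, and let s : Fin m → ℤ. Assume that B(v i, v i) = s i for all i, that B(v i, v j) = 1 whenever i and j are adjacent in T, and that B(v i, v j) = 0 whenever i ≠ j are not adjacent. Then there exists a sign function ε : Fin m → ℤ with ε i ∈ {1, -1} for all i, such that the class c = Σᵢ (ε i) • (v i) satisfies B(c, c) = (Σᵢ s i) - 2·(m - 1). -/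
open SimpleGraph Finset

private lemma walk_parity_aux {V : Type*} {G : SimpleGraph V} (hG : G.IsAcyclic) :
    ∀ {a b : V} (q : G.Walk a b) (p : G.Walk a b), p.IsPath →
      p.length % 2 = q.length % 2 := by
  classical
  intro a b q
  induction q with
  | nil =>
    intro p hp
    rw [SimpleGraph.Walk.isPath_iff_eq_nil.mp hp]
  | @cons a c b h q' ih =>
    intro p hp
    by_cases hc : c ∈ p.support
    · have h1 : (p.takeUntil c hc).IsPath := hp.takeUntil hc
      have h2 : (p.dropUntil c hc).IsPath := hp.dropUntil hc
      have hedge : (SimpleGraph.Walk.cons h SimpleGraph.Walk.nil : G.Walk a c).IsPath := by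
        simp [h.ne]
      have huniq := hG.path_unique ⟨p.takeUntil c hc, h1⟩ ⟨_, hedge⟩
      have hlen : (p.takeUntil c hc).length = 1 := by
        rw [Subtype.ext_iff] at huniq
        simp only at huniq
        rw [huniq]
        simp
      have hsplit : p.length = 1 + (p.dropUntil c hc).length := by
        conv_lhs => rw [← SimpleGraph.Walk.take_spec p hc]
        rw [SimpleGraph.Walk.length_append, hlen]
      have hih := ih (p.dropUntil c hc) h2
      simp only [SimpleGraph.Walk.length_cons]
      omega
    · have hpath : (SimpleGraph.Walk.cons h.symm p).IsPath :=
        (SimpleGraph.Walk.cons_isPath_iff _ _).2 ⟨hp, hc⟩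
      have hih := ih _ hpath
      simp only [SimpleGraph.Walk.length_cons] at hih ⊢
      omega

/-- In a tree, adjacent vertices have distances of opposite parity from any root. -/
private lemma dist_parity_adj {V : Type*} {G : SimpleGraph V} (hG : G.IsTree)
    (r : V) {i j : V} (hij : G.Adj i j) :
    (G.dist r i + G.dist r j) % 2 = 1 := by
  obtain ⟨p, hp, hpl⟩ := hG.isConnected.exists_path_of_dist r i
  obtain ⟨q, hq, hql⟩ := hG.isConnected.exists_path_of_dist r j
  have h1 := walk_parity_aux hG.IsAcyclic (p.concat hij) q hq
  rw [SimpleGraph.Walk.length_concat, hpl, hql] at h1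
  omega

/-- **Orienting a tree of spheres so all intersections are negative.**
Let `T` be a tree on `Fin m` (`m ≥ 1`), let `B` be a symmetric `ℤ`-bilinear form
on a `ℤ`-module `M`, and let `v i ∈ M` with `B (v i) (v i) = s i`,
`B (v i) (v j) = 1` when `i, j` are adjacent in `T`, and `B (v i) (v j) = 0`
when `i ≠ j` are not adjacent.  Then there is a sign function `ε : Fin m → ℤ`
with `ε i ∈ {1, -1}` such that the class `c = ∑ i, ε i • v i` satisfies
`B c c = (∑ i, s i) - 2 * (m - 1)`. -/
theorem tree_orientation_smoothing {m : ℕ} (hm : 1 ≤ m)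
    (T : SimpleGraph (Fin m)) (hT : T.IsTree)
    {M : Type*} [AddCommGroup M] [Module ℤ M]
    (B : LinearMap.BilinForm ℤ M) (hB : ∀ p q : M, B p q = B q p)
    (v : Fin m → M) (s : Fin m → ℤ)
    (hdiag : ∀ i, B (v i) (v i) = s i)
    (hadj : ∀ i j, T.Adj i j → B (v i) (v j) = 1)
    (hnonadj : ∀ i j, i ≠ j → ¬ T.Adj i j → B (v i) (v j) = 0) :
    ∃ ε : Fin m → ℤ, (∀ i, ε i = 1 ∨ ε i = -1) ∧
      B (∑ i, ε i • v i) (∑ i, ε i • v i) = (∑ i, s i) - 2 * ((m : ℤ) - 1) := by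
  classical
  set r : Fin m := ⟨0, hm⟩
  set ε : Fin m → ℤ := fun i => (-1) ^ (T.dist r i) with hε
  have hsign : ∀ i, ε i = 1 ∨ ε i = -1 := fun i =>
    (Nat.even_or_odd (T.dist r i)).imp Even.neg_one_pow Odd.neg_one_pow
  refine ⟨ε, hsign, ?_⟩
  have hsq : ∀ i, ε i * ε i = 1 := by
    intro i; rcases hsign i with h | h <;> rw [h] <;> norm_num
  have hprod : ∀ i j, T.Adj i j → ε i * ε j = -1 := by
    intro i j hij
    have hodd := dist_parity_adj hT r hij
    simp only [hε, ← pow_add]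
    rcases Nat.odd_iff.mpr hodd with ⟨k, hk⟩
    rw [hk, pow_add, pow_mul]
    norm_num
  have hexp : B (∑ i, ε i • v i) (∑ i, ε i • v i)
      = ∑ i, ∑ j, ε i * ε j * B (v i) (v j) := by
    simp only [map_sum, LinearMap.sum_apply]
    refine Finset.sum_congr rfl fun i _ => Finset.sum_congr rfl fun j _ => ?_
    rw [← Int.cast_smul_eq_zsmul ℤ (ε i) (v i), ← Int.cast_smul_eq_zsmul ℤ (ε j) (v j),
      Int.cast_id, Int.cast_id, LinearMap.BilinForm.smul_left,
      LinearMap.BilinForm.smul_right, hB (v j) (v i)]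
    ring
  rw [hexp]
  have hterm : ∀ i j, ε i * ε j * B (v i) (v j)
      = (if i = j then s i else 0) + (if T.Adj i j then (-1 : ℤ) else 0) := by
    intro i j
    by_cases hij : i = j
    · subst hij
      rw [hdiag, hsq, if_pos rfl, if_neg (T.loopless.irrefl i), one_mul, add_zero]
    · rw [if_neg hij]
      by_cases ha : T.Adj i j
      · rw [if_pos ha, hadj i j ha, mul_one, hprod i j ha, zero_add]
      · rw [if_neg ha, hnonadj i j hij ha, mul_zero, add_zero]
  simp only [hterm, Finset.sum_add_distrib]
  have h1 : ∀ i : Fin m, (∑ j, if i = j then s i else (0 : ℤ)) = s i := by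
    intro i; simp
  have h2 : ∀ i : Fin m, (∑ j, if T.Adj i j then (-1 : ℤ) else 0)
      = -(T.degree i : ℤ) := by
    intro i
    rw [Finset.sum_ite, Finset.sum_const, Finset.sum_const]
    simp [SimpleGraph.degree, SimpleGraph.neighborFinset_eq_filter]
  simp only [h1, h2]
  have hdegsum : ∑ i, T.degree i = 2 * T.edgeFinset.card :=
    T.sum_degrees_eq_twice_card_edges
  have hcard : T.edgeFinset.card + 1 = m := by
    simpa using hT.card_edgeFinset
  have hds : ∑ i, -(T.degree i : ℤ) = -(2 * ((m : ℤ) - 1)) := by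
    rw [Finset.sum_neg_distrib, ← Nat.cast_sum, hdegsum]
    push_cast
    omega
  rw [hds]
  ring
end
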